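/- Let {w_t}_{t∈ℕ} be a sequence of nonnegative random variables converging exponentially almost surely to zero (i.e., there exists γ > 1 with γ^t w_t → 0 a.s.), and let {z_t}_{t∈ℕ} be an identically distributed sequence of nonnegative random variables with E[z_0] < ∞. Then ∑_{t=1}^∞ z_t w_t < ∞ almost surely, and consequently T^{-1} ∑_{t=1}^T z_t w_t → 0 almost surely as T → ∞. -/

import Mathlib

open MeasureTheory Filter

/-- Cesàro: if `f` is summable then `T⁻¹ ∑_{t=1}^T f t → 0`. -/
lemma cesaro_aux {f : ℕ → ℝ} (hf : Summable f) :
    Tendsto (fun T : ℕ => (T : ℝ)⁻¹ * ∑ t ∈ Finset.Icc 1 T, f t) atTop (nhds 0) := by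
  have hg : Summable (fun i => f (1 + i)) := by
    simpa [add_comm] using (summable_nat_add_iff 1).2 hf
  have hS : Tendsto (fun T : ℕ => ∑ i ∈ Finset.range T, f (1 + i)) atTop
      (nhds (∑' i, f (1 + i))) := hg.hasSum.tendsto_sum_nat
  have h := tendsto_inv_atTop_nhds_zero_nat.mul hS
  rw [zero_mul] at h
  refine h.congr (fun T => ?_)
  congr 1
  rw [← Finset.Ico_add_one_right_eq_Icc, Finset.sum_Ico_eq_sum_range]
  simp

theorem stmt_11 {Ω : Type*} {mΩ : MeasurableSpace Ω} (μ : Measure Ω) [MeasureTheory.IsProbabilityMeasure μ]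
    (w z : ℕ → Ω → ℝ)
    (hw0 : ∀ t, ∀ᵐ ω ∂μ, 0 ≤ w t ω) (hz0 : ∀ t, ∀ᵐ ω ∂μ, 0 ≤ z t ω)
    (hzmeas : ∀ t, AEMeasurable (z t) μ)
    (heas : ∃ γ : ℝ, 1 < γ ∧ ∀ᵐ ω ∂μ, Tendsto (fun t : ℕ => γ ^ t * w t ω) atTop (nhds 0))
    (hident : ∀ t, ProbabilityTheory.IdentDistrib (z t) (z 0) μ μ)
    (hint : Integrable (z 0) μ) :
    (∀ᵐ ω ∂μ, Summable (fun t : ℕ => z t ω * w t ω)) ∧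
    (∀ᵐ ω ∂μ, Tendsto (fun T : ℕ => (T : ℝ)⁻¹ * ∑ t ∈ Finset.Icc 1 T, z t ω * w t ω)
      atTop (nhds 0)) := by
  obtain ⟨γ, hγ, hconv⟩ := heas
  have hγ0 : (0 : ℝ) < γ := lt_trans one_pos hγ
  set ρ : ℝ := Real.sqrt γ with hρdef
  have hρ1 : 1 < ρ := by
    rw [show (1 : ℝ) = Real.sqrt 1 by simp]
    exact Real.sqrt_lt_sqrt zero_le_one hγ
  have hρ0 : (0 : ℝ) < ρ := lt_trans one_pos hρ1
  have hρsq : ρ ^ 2 = γ := Real.sq_sqrt hγ0.le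
  -- Borel–Cantelli: a.s. eventually `z t ω < ρ ^ t`
  set s : ℕ → Set Ω := fun t => {ω | ρ ^ t ≤ z t ω} with hsdef
  have hBC : ∀ᵐ ω ∂μ, ∀ᶠ t in atTop, ω ∉ s t := by
    apply ae_eventually_notMem
    -- Markov bound on each measure
    set C : ENNReal := ∫⁻ ω, ENNReal.ofReal (z 0 ω) ∂μ with hCdef
    have hC : C ≠ ⊤ := by
      have hle : C ≤ ∫⁻ ω, (‖z 0 ω‖₊ : ENNReal) ∂μ :=
        lintegral_mono fun ω => Real.ofReal_le_enorm _
      exact (lt_of_le_of_lt hle hint.2).ne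
    have hmeas : ∀ t : ℕ, μ (s t) ≤ C / ENNReal.ofReal (ρ ^ t) := by
      intro t
      have hmap : μ (s t) = μ {ω | ρ ^ t ≤ z 0 ω} := by
        have h1 : μ (s t) = (μ.map (z t)) (Set.Ici (ρ ^ t)) := by
          rw [Measure.map_apply_of_aemeasurable (hzmeas t) measurableSet_Ici]
          rfl
        have h2 : μ {ω | ρ ^ t ≤ z 0 ω} = (μ.map (z 0)) (Set.Ici (ρ ^ t)) := by
          rw [Measure.map_apply_of_aemeasurable (hzmeas 0) measurableSet_Ici]
          rfl
        rw [h1, h2, (hident t).map_eq]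
      rw [hmap]
      have hsub : {ω | ρ ^ t ≤ z 0 ω} ⊆
          {ω | ENNReal.ofReal (ρ ^ t) ≤ ENNReal.ofReal (z 0 ω)} :=
        fun ω hω => ENNReal.ofReal_le_ofReal hω
      refine le_trans (measure_mono hsub) ?_
      exact meas_ge_le_lintegral_div (ENNReal.measurable_ofReal.comp_aemeasurable (hzmeas 0))
        (ENNReal.ofReal_pos.2 (pow_pos hρ0 t)).ne' ENNReal.ofReal_ne_top
    refine ne_top_of_le_ne_top ?_ (ENNReal.tsum_le_tsum hmeas)
    have hrw : ∀ t : ℕ, C / ENNReal.ofReal (ρ ^ t) = C * ((ENNReal.ofReal ρ)⁻¹) ^ t := by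
      intro t
      rw [ENNReal.div_eq_inv_mul, mul_comm, ENNReal.ofReal_pow hρ0.le, ENNReal.inv_pow]
    rw [tsum_congr hrw, ENNReal.tsum_mul_left, ENNReal.tsum_geometric]
    apply ENNReal.mul_ne_top hC
    rw [Ne, ENNReal.inv_eq_top, tsub_eq_zero_iff_le, not_le]
    refine ENNReal.inv_lt_one.2 ?_
    rw [← ENNReal.ofReal_one]
    exact (ENNReal.ofReal_lt_ofReal_iff hρ0).2 hρ1
  have hw0' : ∀ᵐ ω ∂μ, ∀ t, 0 ≤ w t ω := (ae_all_iff).2 hw0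
  have hz0' : ∀ᵐ ω ∂μ, ∀ t, 0 ≤ z t ω := (ae_all_iff).2 hz0
  have hsum : ∀ᵐ ω ∂μ, Summable (fun t : ℕ => z t ω * w t ω) := by
    filter_upwards [hw0', hz0', hconv, hBC] with ω hw hz hc hb
    have hρinv0 : (0 : ℝ) ≤ ρ⁻¹ := inv_nonneg.2 hρ0.le
    have hρinv1 : ρ⁻¹ < 1 := inv_lt_one_of_one_lt₀ hρ1
    refine Summable.of_norm_bounded_eventually (g := fun t => (ρ⁻¹) ^ t)
      (summable_geometric_of_lt_one hρinv0 hρinv1) ?_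
    rw [Nat.cofinite_eq_atTop]
    have hcb : ∀ᶠ t in atTop, γ ^ t * w t ω ≤ 1 := by
      have := hc.eventually (eventually_le_nhds (by norm_num : (0:ℝ) < 1))
      exact this
    filter_upwards [hb, hcb] with t hbt hct
    have hzlt : z t ω < ρ ^ t := lt_of_not_ge hbt
    have hγt : (0 : ℝ) < γ ^ t := pow_pos hγ0 t
    have hwle : w t ω ≤ (γ ^ t)⁻¹ := by
      rw [← mul_le_mul_iff_right₀ hγt, mul_inv_cancel₀ hγt.ne']
      exact hct
    have hkey : ρ ^ t * (γ ^ t)⁻¹ = (ρ⁻¹) ^ t := by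
      rw [← hρsq, ← inv_pow, ← inv_pow, ← mul_pow]
      congr 1
      field_simp
    calc ‖z t ω * w t ω‖ = z t ω * w t ω := by
          rw [Real.norm_eq_abs, abs_of_nonneg (mul_nonneg (hz t) (hw t))]
      _ ≤ ρ ^ t * w t ω := mul_le_mul_of_nonneg_right hzlt.le (hw t)
      _ ≤ ρ ^ t * (γ ^ t)⁻¹ := mul_le_mul_of_nonneg_left hwle (pow_nonneg hρ0.le t)
      _ = (ρ⁻¹) ^ t := hkey
  refine ⟨hsum, ?_⟩
  filter_upwards [hsum] with ω hs
  exact cesaro_aux hs
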